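/- Let f : {0,1}^d → R be submodular with f̂ its Lovász extension, x ∈ [0,1]^d with sorted order x_{π(1)} ≥ … ≥ x_{π(d)}, and A_i = {π(1),…,π(i)}. Define g ∈ R^d by g_{π(i)} = f(χ_{A_i}) − f(χ_{A_{i−1}}). Then g is a subgradient of f̂ at x: for all y ∈ [0,1]^d, f̂(y) ≥ f̂(x) + ⟨g, y − x⟩. -/

import Mathlib

open MeasureTheory

/-- A set function on subsets of `[d]` is submodular. -/
def Submodular {d : ℕ} (f : Set (Fin d) → ℝ) : Prop :=
  ∀ A B : Set (Fin d), f (A ∪ B) + f (A ∩ B) ≤ f A + f B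

/-- The Lovász extension of `f`, via the expectation over a uniform threshold. -/
noncomputable def lovasz {d : ℕ} (f : Set (Fin d) → ℝ) (v : Fin d → ℝ) : ℝ :=
  ∫ τ in Set.Ioc (0 : ℝ) 1, f {j | τ < v j}

namespace Stmt11Aux

variable {d : ℕ}

/-- The chain of sets, indexed by natural numbers. -/
def Bset (π : Equiv.Perm (Fin d)) (m : ℕ) : Set (Fin d) :=
  {j | ∃ k : Fin d, (k : ℕ) < m ∧ π k = j}

lemma mem_Bset {π : Equiv.Perm (Fin d)} {m : ℕ} {j : Fin d} :
    j ∈ Bset π m ↔ ((π.symm j : Fin d) : ℕ) < m := by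
  constructor
  · rintro ⟨k, hk, rfl⟩; simpa using hk
  · intro h; exact ⟨π.symm j, h, π.apply_symm_apply j⟩

lemma Bset_zero (π : Equiv.Perm (Fin d)) : Bset π 0 = ∅ := by
  ext j; simp [mem_Bset]

lemma Bset_of_le (π : Equiv.Perm (Fin d)) {m : ℕ} (h : d ≤ m) :
    Bset π m = Set.univ := by
  ext j; simp only [Set.mem_univ, iff_true, mem_Bset]
  exact lt_of_lt_of_le (π.symm j).isLt h

/-- Submodularity step: the marginal gain along the chain dominates the
indicator-weighted term. -/
lemma step_le (f : Set (Fin d) → ℝ) (hsub : Submodular f) (π : Equiv.Perm (Fin d))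
    (S : Set (Fin d)) (k : Fin d) :
    (f (Bset π ((k : ℕ) + 1)) - f (Bset π (k : ℕ))) * S.indicator (fun _ => (1 : ℝ)) (π k)
      ≤ f (S ∩ Bset π ((k : ℕ) + 1)) - f (S ∩ Bset π (k : ℕ)) := by
  by_cases hk : π k ∈ S
  · rw [Set.indicator_of_mem hk, mul_one]
    have h := hsub (Bset π (k : ℕ)) (S ∩ Bset π ((k : ℕ) + 1))
    have hU : Bset π (k : ℕ) ∪ S ∩ Bset π ((k : ℕ) + 1) = Bset π ((k : ℕ) + 1) := by
      apply Set.Subset.antisymm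
      · rintro j (hj | hj)
        · exact mem_Bset.2 (Nat.lt_succ_of_lt (mem_Bset.1 hj))
        · exact hj.2
      · intro j hj
        rcases Nat.lt_succ_iff_lt_or_eq.1 (mem_Bset.1 hj) with h' | h'
        · exact Or.inl (mem_Bset.2 h')
        · right
          have hjk : j = π k := by
            have : π.symm j = k := Fin.ext h'
            rw [← π.apply_symm_apply j, this]
          refine ⟨?_, hj⟩
          rw [hjk]; exact hk
    have hI : Bset π (k : ℕ) ∩ (S ∩ Bset π ((k : ℕ) + 1)) = S ∩ Bset π (k : ℕ) := by
      ext j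
      simp only [Set.mem_inter_iff, mem_Bset]
      constructor
      · rintro ⟨h1, h2, _⟩; exact ⟨h2, h1⟩
      · rintro ⟨h1, h2⟩; exact ⟨h2, h1, Nat.lt_succ_of_lt h2⟩
    rw [hU, hI] at h
    linarith
  · rw [Set.indicator_of_notMem hk, mul_zero]
    have hEq : S ∩ Bset π ((k : ℕ) + 1) = S ∩ Bset π (k : ℕ) := by
      ext j
      simp only [Set.mem_inter_iff, mem_Bset]
      constructor
      · rintro ⟨hjS, hj⟩
        refine ⟨hjS, ?_⟩
        rcases Nat.lt_succ_iff_lt_or_eq.1 hj with h' | h'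
        · exact h'
        · exfalso
          apply hk
          have hjk : j = π k := by
            have : π.symm j = k := Fin.ext h'
            rw [← π.apply_symm_apply j, this]
          rw [← hjk]; exact hjS
      · rintro ⟨hjS, hj⟩; exact ⟨hjS, Nat.lt_succ_of_lt hj⟩
    rw [hEq]
    simp

/-- Key subgradient inequality for an arbitrary set `S`. -/
lemma key_le (f : Set (Fin d) → ℝ) (hsub : Submodular f) (π : Equiv.Perm (Fin d))
    (g : Fin d → ℝ)
    (hg : ∀ k : Fin d, g (π k) = f (Bset π ((k : ℕ) + 1)) - f (Bset π (k : ℕ)))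
    (S : Set (Fin d)) :
    f ∅ + ∑ j, g j * S.indicator (fun _ => (1 : ℝ)) j ≤ f S := by
  have h1 : ∑ j, g j * S.indicator (fun _ => (1 : ℝ)) j
      = ∑ k : Fin d, g (π k) * S.indicator (fun _ => (1 : ℝ)) (π k) :=
    (Equiv.sum_comp π (fun j => g j * S.indicator (fun _ => (1 : ℝ)) j)).symm
  set H : ℕ → ℝ := fun m => f (S ∩ Bset π m) with hH
  have h2 : ∑ k : Fin d, g (π k) * S.indicator (fun _ => (1 : ℝ)) (π k)
      ≤ ∑ k : Fin d, (H ((k : ℕ) + 1) - H (k : ℕ)) := by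
    apply Finset.sum_le_sum
    intro k _
    rw [hg k]
    exact step_le f hsub π S k
  have h3 : ∑ k : Fin d, (H ((k : ℕ) + 1) - H (k : ℕ)) = H d - H 0 := by
    rw [Fin.sum_univ_eq_sum_range (fun m => H (m + 1) - H m) d]
    exact Finset.sum_range_sub H d
  have h4 : H d = f S := by
    simp only [hH, Bset_of_le π (le_refl d), Set.inter_univ]
  have h5 : H 0 = f ∅ := by
    simp only [hH, Bset_zero, Set.inter_empty]
  rw [h1]
  have := h2.trans_eq (h3.trans (by rw [h4, h5]))
  linarith

/-- Exact telescoping identity for the chain sets themselves. -/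
lemma key_eq (f : Set (Fin d) → ℝ) (π : Equiv.Perm (Fin d))
    (g : Fin d → ℝ)
    (hg : ∀ k : Fin d, g (π k) = f (Bset π ((k : ℕ) + 1)) - f (Bset π (k : ℕ)))
    {m : ℕ} (hm : m ≤ d) :
    f (Bset π m) = f ∅ + ∑ j, g j * (Bset π m).indicator (fun _ => (1 : ℝ)) j := by
  have h1 : ∑ j, g j * (Bset π m).indicator (fun _ => (1 : ℝ)) j
      = ∑ k : Fin d, g (π k) * (Bset π m).indicator (fun _ => (1 : ℝ)) (π k) :=
    (Equiv.sum_comp π (fun j => g j * (Bset π m).indicator (fun _ => (1 : ℝ)) j)).symm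
  set H : ℕ → ℝ := fun n => f (Bset π (min n m)) with hH
  have h2 : ∀ k : Fin d, g (π k) * (Bset π m).indicator (fun _ => (1 : ℝ)) (π k)
      = H ((k : ℕ) + 1) - H (k : ℕ) := by
    intro k
    have hmem : π k ∈ Bset π m ↔ (k : ℕ) < m := by
      rw [mem_Bset, π.symm_apply_apply]
    by_cases h : (k : ℕ) < m
    · rw [Set.indicator_of_mem (hmem.2 h), mul_one, hg k]
      have e1 : min ((k : ℕ) + 1) m = (k : ℕ) + 1 := Nat.min_eq_left h
      have e2 : min (k : ℕ) m = (k : ℕ) := Nat.min_eq_left (le_of_lt h)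
      simp only [hH, e1, e2]
    · rw [Set.indicator_of_notMem (fun hc => h (hmem.1 hc)), mul_zero]
      have hle : m ≤ (k : ℕ) := le_of_not_gt h
      have e1 : min ((k : ℕ) + 1) m = m := Nat.min_eq_right (le_trans hle (Nat.le_succ _))
      have e2 : min (k : ℕ) m = m := Nat.min_eq_right hle
      simp only [hH, e1, e2, sub_self]
  have h3 : ∑ k : Fin d, (H ((k : ℕ) + 1) - H (k : ℕ)) = H d - H 0 := by
    rw [Fin.sum_univ_eq_sum_range (fun n => H (n + 1) - H n) d]
    exact Finset.sum_range_sub H d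
  have h4 : H d = f (Bset π m) := by
    simp only [hH, Nat.min_eq_right hm]
  have h5 : H 0 = f ∅ := by
    simp only [hH, Nat.min_eq_left (Nat.zero_le m), Bset_zero]
  rw [h1, Finset.sum_congr rfl (fun k _ => h2 k), h3, h4, h5]
  ring

/-- The superlevel sets of a sorted vector are the chain sets. -/
lemma sorted_set (x : Fin d → ℝ) (π : Equiv.Perm (Fin d))
    (hπ : Antitone fun k => x (π k)) (τ : ℝ) :
    ∃ m ≤ d, {j | τ < x j} = Bset π m := by
  classical
  set T := Finset.univ.filter (fun i : Fin d => τ < x (π i)) with hT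
  refine ⟨T.card, le_trans (Finset.card_filter_le _ _) (by simp), ?_⟩
  have hmem : ∀ i : Fin d, i ∈ T ↔ (i : ℕ) < T.card := by
    intro i
    constructor
    · intro hi
      have hsubs : Finset.Iic i ⊆ T := by
        intro i' hi'
        simp only [Finset.mem_Iic] at hi'
        simp only [hT, Finset.mem_filter, Finset.mem_univ, true_and] at hi ⊢
        exact lt_of_lt_of_le hi (hπ hi')
      have := Finset.card_le_card hsubs
      rw [Fin.card_Iic] at this
      omega
    · intro hlt
      by_contra hi
      have hsubs : T ⊆ Finset.Iio i := by
        intro i' hi'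
        simp only [Finset.mem_Iio]
        by_contra h'
        apply hi
        simp only [hT, Finset.mem_filter, Finset.mem_univ, true_and] at hi' ⊢
        exact lt_of_lt_of_le hi' (hπ (le_of_not_gt h'))
      have := Finset.card_le_card hsubs
      rw [Fin.card_Iio] at this
      omega
  ext j
  simp only [Set.mem_setOf_eq, mem_Bset]
  rw [← hmem (π.symm j)]
  simp [hT]

/-- The integral of a threshold indicator over `(0, 1]`. -/
lemma integral_ind {c : ℝ} (h0 : 0 ≤ c) (h1 : c ≤ 1) :
    ∫ τ in Set.Ioc (0 : ℝ) 1, (Set.Iio c).indicator (fun _ => (1 : ℝ)) τ = c := by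
  rw [MeasureTheory.setIntegral_indicator measurableSet_Iio]
  have hset : Set.Ioc (0 : ℝ) 1 ∩ Set.Iio c = Set.Ioo 0 c := by
    ext τ
    simp only [Set.mem_inter_iff, Set.mem_Ioc, Set.mem_Iio, Set.mem_Ioo]
    constructor
    · rintro ⟨⟨ha, _⟩, hb⟩; exact ⟨ha, hb⟩
    · rintro ⟨ha, hb⟩; exact ⟨⟨ha, le_trans (le_of_lt hb) h1⟩, hb⟩
  rw [hset]
  simp [Real.volume_Ioo, ENNReal.toReal_ofReal h0, h0]

lemma integrableOn_ind (c : ℝ) :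
    IntegrableOn (fun τ => (Set.Iio c).indicator (fun _ => (1 : ℝ)) τ) (Set.Ioc (0 : ℝ) 1) := by
  exact (MeasureTheory.integrable_const 1).indicator measurableSet_Iio

/-- The piecewise-constant linearization is integrable over `(0, 1]`. -/
lemma G_integrable (c0 : ℝ) (g v : Fin d → ℝ) :
    IntegrableOn
      (fun τ => c0 + ∑ j, g j * (Set.Iio (v j)).indicator (fun _ => (1 : ℝ)) τ)
      (Set.Ioc (0 : ℝ) 1) := by
  apply Integrable.add (MeasureTheory.integrable_const c0)
  exact MeasureTheory.integrable_finset_sum _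
    (fun j _ => (integrableOn_ind (v j)).const_mul (g j))

lemma G_integral (c0 : ℝ) (g v : Fin d → ℝ) (hv : ∀ j, v j ∈ Set.Icc (0 : ℝ) 1) :
    ∫ τ in Set.Ioc (0 : ℝ) 1,
        (c0 + ∑ j, g j * (Set.Iio (v j)).indicator (fun _ => (1 : ℝ)) τ)
      = c0 + ∑ j, g j * v j := by
  rw [MeasureTheory.integral_add (MeasureTheory.integrable_const c0)
    (MeasureTheory.integrable_finset_sum _
      (fun j _ => (integrableOn_ind (v j)).const_mul (g j)))]
  rw [MeasureTheory.integral_finset_sum _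
    (fun j _ => (integrableOn_ind (v j)).const_mul (g j))]
  congr 1
  · simp [Real.volume_Ioc]
  · apply Finset.sum_congr rfl
    intro j _
    rw [MeasureTheory.integral_const_mul, integral_ind (hv j).1 (hv j).2]

/-- The Lovász integrand is integrable. -/
lemma F_integrable (f : Set (Fin d) → ℝ) (y : Fin d → ℝ) :
    IntegrableOn (fun τ => f {j | τ < y j}) (Set.Ioc (0 : ℝ) 1) := by
  classical
  have hrep : (fun τ : ℝ => f {j | τ < y j})
      = fun τ => ∑ S : Finset (Fin d),
          ({τ' : ℝ | ∀ j, (τ' < y j ↔ j ∈ S)}).indicator (fun _ => f ↑S) τ := by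
    funext τ
    rw [Finset.sum_eq_single (Finset.univ.filter fun j => τ < y j)]
    · rw [Set.indicator_of_mem (by intro j; simp)]
      congr 1
      ext j
      simp
    · intro S _ hne
      rw [Set.indicator_of_notMem]
      intro hmemS
      apply hne
      ext j
      simp only [Finset.mem_filter, Finset.mem_univ, true_and]
      exact (hmemS j).symm
    · intro h; exact absurd (Finset.mem_univ _) h
  rw [hrep]
  apply MeasureTheory.integrable_finset_sum
  intro S _
  apply Integrable.indicator (MeasureTheory.integrable_const _)
  have hset : {τ' : ℝ | ∀ j, (τ' < y j ↔ j ∈ S)}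
      = ⋂ j, (if j ∈ S then Set.Iio (y j) else Set.Ici (y j)) := by
    ext τ'
    simp only [Set.mem_setOf_eq, Set.mem_iInter]
    refine forall_congr' fun j => ?_
    by_cases h : j ∈ S <;> simp [h, Set.mem_Iio, Set.mem_Ici, not_lt]
  rw [hset]
  exact MeasurableSet.iInter fun j => by
    by_cases h : j ∈ S <;> simp [h, measurableSet_Iio, measurableSet_Ici]

end Stmt11Aux

open Stmt11Aux in
theorem stmt_11 {d : ℕ} (f : Set (Fin d) → ℝ) (hsub : Submodular f)
    (x : Fin d → ℝ) (hx : ∀ j, x j ∈ Set.Icc (0 : ℝ) 1)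
    (π : Equiv.Perm (Fin d)) (hπ : Antitone fun k => x (π k))
    (A : Fin (d + 1) → Set (Fin d))
    (hA : ∀ i, A i = {j | ∃ k : Fin d, (k : ℕ) < (i : ℕ) ∧ π k = j})
    (g : Fin d → ℝ)
    (hg : ∀ k : Fin d, g (π k) = f (A k.succ) - f (A k.castSucc)) :
    ∀ y : Fin d → ℝ, (∀ j, y j ∈ Set.Icc (0 : ℝ) 1) →
      lovasz f y ≥ lovasz f x + ∑ j, g j * (y j - x j) := by
  classical
  intro y hy
  have hgB : ∀ k : Fin d, g (π k) = f (Bset π ((k : ℕ) + 1)) - f (Bset π (k : ℕ)) := by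
    intro k
    rw [hg k, hA, hA]
    simp [Bset, Fin.val_succ, Fin.coe_castSucc]
  -- the linearization
  set G : (Fin d → ℝ) → ℝ → ℝ :=
    fun v τ => f ∅ + ∑ j, g j * (Set.Iio (v j)).indicator (fun _ => (1 : ℝ)) τ with hGdef
  -- equality at x
  have hxEq : ∀ τ : ℝ, f {j | τ < x j} = G x τ := by
    intro τ
    obtain ⟨m, hm, hset⟩ := sorted_set x π hπ τ
    rw [hset, key_eq f π g hgB hm]
    congr 1
    apply Finset.sum_congr rfl
    intro j _
    congr 1
    by_cases h : τ < x j
    · rw [Set.indicator_of_mem (show j ∈ Bset π m by rw [← hset]; exact h),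
        Set.indicator_of_mem (show τ ∈ Set.Iio (x j) from h)]
    · rw [Set.indicator_of_notMem (show j ∉ Bset π m by rw [← hset]; exact h),
        Set.indicator_of_notMem (show τ ∉ Set.Iio (x j) from h)]
  -- inequality at y
  have hyIneq : ∀ τ : ℝ, G y τ ≤ f {j | τ < y j} := by
    intro τ
    have := key_le f hsub π g hgB {j | τ < y j}
    refine le_trans (le_of_eq ?_) this
    have hS : ∀ j : Fin d, (Set.Iio (y j)).indicator (fun _ => (1 : ℝ)) τ
        = Set.indicator {j' | τ < y j'} (fun _ => (1 : ℝ)) j := by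
      intro j
      by_cases h : τ < y j
      · rw [Set.indicator_of_mem (show τ ∈ Set.Iio (y j) from h),
          Set.indicator_of_mem (show j ∈ {j' | τ < y j'} from h)]
      · rw [Set.indicator_of_notMem (show τ ∉ Set.Iio (y j) from h),
          Set.indicator_of_notMem (show j ∉ {j' | τ < y j'} from h)]
    simp only [hGdef]
    exact congrArg (fun t => f ∅ + t) (Finset.sum_congr rfl fun j _ => by rw [hS j])
  -- compute lovasz f x
  have hlx : lovasz f x = f ∅ + ∑ j, g j * x j := by
    unfold lovasz
    rw [MeasureTheory.setIntegral_congr_fun measurableSet_Ioc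
      (fun τ _ => hxEq τ)]
    exact G_integral (f ∅) g x hx
  -- bound lovasz f y
  have hly : f ∅ + ∑ j, g j * y j ≤ lovasz f y := by
    unfold lovasz
    rw [← G_integral (f ∅) g y hy]
    exact MeasureTheory.setIntegral_mono_on (G_integrable (f ∅) g y)
      (F_integrable f y) measurableSet_Ioc (fun τ _ => hyIneq τ)
  have hsum : ∑ j, g j * (y j - x j) = (∑ j, g j * y j) - ∑ j, g j * x j := by
    rw [← Finset.sum_sub_distrib]
    apply Finset.sum_congr rfl
    intro j _
    ring
  rw [ge_iff_le, hlx, hsum]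
  linarith
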